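/- Let U ⊆ ℂ be open, let ζ₁, ζ₂ be holomorphic on U with ζ₂′ ≠ 0 on U, set R = ζ₁′/ζ₂′ and assume Im R > 0 on U. Suppose F : U → V, F(z) = (Re ζ₁(z), Re ζ₂(z)), is a homeomorphism onto an open set V ⊆ ℝ² with inverse G. Write coordinates (x₁,x₂) on V and define y₁ = Im ζ₁ ∘ G, y₂ = Im ζ₂ ∘ G on V. Then y₁, y₂ are differentiable on V and at every point of V: ∂y₂/∂x₁ = −1/Im R, ∂y₂/∂x₂ = Re R / Im R = −∂y₁/∂x₁, and ∂y₁/∂x₂ = |R|² / Im R, where R is evaluated at the corresponding point G(x₁,x₂). -/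

import Mathlib

open Complex ContinuousLinearMap

private lemma aux_c₁_re (R : ℂ) : ((-(R.im)⁻¹ : ℝ) * Complex.I : ℂ).re = 0 := by simp

private lemma aux1 (R q : ℂ) (h : R.im ≠ 0) :
    ((R * q).re : ℂ) * ((-(R.im)⁻¹ : ℝ) * Complex.I) +
      (q.re : ℂ) * (1 + ((R.re / R.im : ℝ)) * Complex.I) = q := by
  apply Complex.ext <;>
    simp [Complex.mul_re, Complex.mul_im, Complex.add_re, Complex.add_im] <;>
    field_simp <;> ring

private lemma aux2re (R : ℂ) (u v : ℝ) (h : R.im ≠ 0) :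
    ((u : ℂ) * ((-(R.im)⁻¹ : ℝ) * Complex.I) +
      (v : ℂ) * (1 + ((R.re / R.im : ℝ)) * Complex.I)).re = v := by
  simp [Complex.mul_re, Complex.add_re]

private lemma aux2 (R : ℂ) (u v : ℝ) (h : R.im ≠ 0) :
    (R * ((u : ℂ) * ((-(R.im)⁻¹ : ℝ) * Complex.I) +
      (v : ℂ) * (1 + ((R.re / R.im : ℝ)) * Complex.I))).re = u := by
  simp [Complex.mul_re, Complex.mul_im, Complex.add_re, Complex.add_im]
  field_simp
  ring

/-- partial derivatives of the imaginary parts `y₁ = Im ζ₁ ∘ G`,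
`y₂ = Im ζ₂ ∘ G` of the Abelian integrals in the amoeba coordinates
`(x₁,x₂) = (Re ζ₁, Re ζ₂)`: with `R = ζ₁′/ζ₂′` and `Im R > 0`,
`∂y₂/∂x₁ = −1/Im R`, `∂y₂/∂x₂ = Re R/Im R = −∂y₁/∂x₁`, `∂y₁/∂x₂ = |R|²/Im R`. -/
theorem amoeba_coordinates_partial_derivatives
    (U : Set ℂ) (hU : IsOpen U) (V : Set (ℝ × ℝ)) (hV : IsOpen V)
    (ζ₁ ζ₂ ζ₁' ζ₂' : ℂ → ℂ)
    (h₁ : ∀ z ∈ U, HasDerivAt ζ₁ (ζ₁' z) z)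
    (h₂ : ∀ z ∈ U, HasDerivAt ζ₂ (ζ₂' z) z)
    (hne : ∀ z ∈ U, ζ₂' z ≠ 0)
    (hR : ∀ z ∈ U, 0 < (ζ₁' z / ζ₂' z).im)
    (G : ℝ × ℝ → ℂ)
    (hFmem : ∀ z ∈ U, ((ζ₁ z).re, (ζ₂ z).re) ∈ V)
    (hGmem : ∀ p ∈ V, G p ∈ U)
    (hGF : ∀ z ∈ U, G ((ζ₁ z).re, (ζ₂ z).re) = z)
    (hFG : ∀ p ∈ V, (((ζ₁ (G p)).re, (ζ₂ (G p)).re) : ℝ × ℝ) = p)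
    (hGcont : ContinuousOn G V) :
    ∀ p ∈ V,
      DifferentiableAt ℝ (fun q => (ζ₁ (G q)).im) p ∧
      DifferentiableAt ℝ (fun q => (ζ₂ (G q)).im) p ∧
      fderiv ℝ (fun q => (ζ₂ (G q)).im) p (1, 0) =
        -1 / (ζ₁' (G p) / ζ₂' (G p)).im ∧
      fderiv ℝ (fun q => (ζ₂ (G q)).im) p (0, 1) =
        (ζ₁' (G p) / ζ₂' (G p)).re / (ζ₁' (G p) / ζ₂' (G p)).im ∧
      fderiv ℝ (fun q => (ζ₁ (G q)).im) p (1, 0) =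
        -((ζ₁' (G p) / ζ₂' (G p)).re / (ζ₁' (G p) / ζ₂' (G p)).im) ∧
      fderiv ℝ (fun q => (ζ₁ (G q)).im) p (0, 1) =
        ‖ζ₁' (G p) / ζ₂' (G p)‖ ^ 2 / (ζ₁' (G p) / ζ₂' (G p)).im := by
  intro p hp
  set z := G p with hz
  have hzU : z ∈ U := hGmem p hp
  set a := ζ₁' z with ha
  set b := ζ₂' z with hb
  have hbne : b ≠ 0 := hne z hzU
  set R := a / b with hRdef
  have hRim : 0 < R.im := hR z hzU
  have hRim' : R.im ≠ 0 := ne_of_gt hRim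
  have haRb : a = R * b := by rw [hRdef]; exact (div_mul_cancel₀ a hbne).symm
  clear_value R
  -- derivative of F = (Re ζ₁, Re ζ₂) at z
  have hM₁ : HasFDerivAt ζ₁ (((1 : ℂ →L[ℂ] ℂ).smulRight a).restrictScalars ℝ) z :=
    ((h₁ z hzU).hasFDerivAt).restrictScalars ℝ
  have hM₂ : HasFDerivAt ζ₂ (((1 : ℂ →L[ℂ] ℂ).smulRight b).restrictScalars ℝ) z :=
    ((h₂ z hzU).hasFDerivAt).restrictScalars ℝ
  set F' : ℂ →L[ℝ] ℝ × ℝ :=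
    (Complex.reCLM.comp (((1 : ℂ →L[ℂ] ℂ).smulRight a).restrictScalars ℝ)).prod
      (Complex.reCLM.comp (((1 : ℂ →L[ℂ] ℂ).smulRight b).restrictScalars ℝ)) with hF'
  have hF'apply : ∀ w : ℂ, F' w = ((w * a).re, (w * b).re) := fun w => rfl
  have hFder : HasFDerivAt (fun w => (((ζ₁ w).re, (ζ₂ w).re) : ℝ × ℝ)) F' z :=
    HasFDerivAt.prodMk (Complex.reCLM.hasFDerivAt.comp z hM₁) (Complex.reCLM.hasFDerivAt.comp z hM₂)
  -- explicit inverse L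
  set c₁ : ℂ := ((-(R.im)⁻¹ : ℝ)) * Complex.I with hc₁
  set c₂ : ℂ := 1 + ((R.re / R.im : ℝ)) * Complex.I with hc₂
  set w₁ : ℂ := b⁻¹ * c₁ with hw₁
  set w₂ : ℂ := b⁻¹ * c₂ with hw₂
  set L : ℝ × ℝ →L[ℝ] ℂ :=
    (ContinuousLinearMap.fst ℝ ℝ ℝ).smulRight w₁ + (ContinuousLinearMap.snd ℝ ℝ ℝ).smulRight w₂
    with hL
  have hLapply : ∀ q : ℝ × ℝ, L q = (q.1 : ℂ) * w₁ + (q.2 : ℂ) * w₂ := by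
    intro q
    show q.1 • w₁ + q.2 • w₂ = _
    simp [Complex.real_smul]
  have hLb : ∀ q : ℝ × ℝ, L q * b = (q.1 : ℂ) * c₁ + (q.2 : ℂ) * c₂ := by
    intro q
    rw [hLapply, hw₁, hw₂]
    field_simp
  have hLa : ∀ q : ℝ × ℝ, L q * a = R * ((q.1 : ℂ) * c₁ + (q.2 : ℂ) * c₂) := by
    intro q
    rw [haRb, show L q * (R * b) = R * (L q * b) by ring, hLb]
  have key : ∀ w : ℂ, L (F' w) = w := by
    intro w
    rw [hF'apply]
    have h1 : w * a = R * (b * w) := by rw [haRb]; ring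
    have h2 : w * b = b * w := by ring
    rw [hLapply, h1, h2, hw₁, hw₂]
    have := aux1 R (b * w) hRim'
    rw [hc₁, hc₂]
    calc ((R * (b * w)).re : ℂ) * (b⁻¹ * (((-(R.im)⁻¹ : ℝ)) * Complex.I)) +
          ((b * w).re : ℂ) * (b⁻¹ * (1 + ((R.re / R.im : ℝ)) * Complex.I))
        = b⁻¹ * (((R * (b * w)).re : ℂ) * (((-(R.im)⁻¹ : ℝ)) * Complex.I) +
            ((b * w).re : ℂ) * (1 + ((R.re / R.im : ℝ)) * Complex.I)) := by ring
      _ = b⁻¹ * (b * w) := by rw [this]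
      _ = w := by field_simp
  have key2 : ∀ q : ℝ × ℝ, F' (L q) = q := by
    intro q
    rw [hF'apply, hLa, hLb, hc₁, hc₂]
    exact Prod.ext (aux2 R q.1 q.2 hRim') (aux2re R q.1 q.2 hRim')
  set E : ℂ ≃L[ℝ] ℝ × ℝ := ContinuousLinearEquiv.equivOfInverse F' L key key2 with hE
  have hFderE : HasFDerivAt (fun w => (((ζ₁ w).re, (ζ₂ w).re) : ℝ × ℝ)) (E : ℂ →L[ℝ] ℝ × ℝ) z :=
    hFder
  have hGc : ContinuousAt G p := hGcont.continuousAt (hV.mem_nhds hp)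
  have hev : ∀ᶠ q in nhds p, (((ζ₁ (G q)).re, (ζ₂ (G q)).re) : ℝ × ℝ) = q := by
    filter_upwards [hV.mem_nhds hp] with q hq using hFG q hq
  have hGderL : HasFDerivAt G L p := hFderE.of_local_left_inverse hGc hev
  have hy₁ : HasFDerivAt (fun q => (ζ₁ (G q)).im)
      ((Complex.imCLM.comp (((1 : ℂ →L[ℂ] ℂ).smulRight a).restrictScalars ℝ)).comp L) p :=
    (Complex.imCLM.hasFDerivAt.comp z hM₁).comp p hGderL
  have hy₂ : HasFDerivAt (fun q => (ζ₂ (G q)).im)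
      ((Complex.imCLM.comp (((1 : ℂ →L[ℂ] ℂ).smulRight b).restrictScalars ℝ)).comp L) p :=
    (Complex.imCLM.hasFDerivAt.comp z hM₂).comp p hGderL
  have e₂ : ∀ v : ℝ × ℝ, fderiv ℝ (fun q => (ζ₂ (G q)).im) p v = (L v * b).im := by
    intro v; rw [hy₂.fderiv]; rfl
  have e₁ : ∀ v : ℝ × ℝ, fderiv ℝ (fun q => (ζ₁ (G q)).im) p v = (L v * a).im := by
    intro v; rw [hy₁.fderiv]; rfl
  have hnorm : ‖R‖ ^ 2 = R.re ^ 2 + R.im ^ 2 := by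
    rw [Complex.sq_norm, Complex.normSq_apply]; ring
  refine ⟨hy₁.differentiableAt, hy₂.differentiableAt, ?_, ?_, ?_, ?_⟩
  · rw [e₂, hLb, hc₁, hc₂]
    simp [Complex.mul_im, Complex.add_im]
    field_simp
  · rw [e₂, hLb, hc₁, hc₂]
    simp [Complex.mul_im, Complex.add_im]
  · rw [e₁, hLa, hc₁, hc₂]
    simp [Complex.mul_im, Complex.mul_re, Complex.add_im, Complex.add_re]
    field_simp
  · rw [e₁, hLa, hc₁, hc₂, hnorm]
    simp [Complex.mul_im, Complex.mul_re, Complex.add_im, Complex.add_re]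
    field_simp
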